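/- Let R be a field and G a finite group of order n with a fixed listing g_1, …, g_n. For every non-zero element u of the group ring RG: u is a zero-divisor (there exists non-zero w ∈ RG with uw = 0) if and only if det σ(u) = 0; and u is a unit of RG if and only if det σ(u) ≠ 0. -/

import Mathlib

/-- The `RG`-matrix of an element `w` of the group ring `RG`, relative to a
listing `g : Fin n ≃ G` of the elements of `G`. -/
noncomputable def rgMatrix {R : Type*} [Semiring R] {G : Type*} [Group G] {n : ℕ}
    (g : Fin n ≃ G) (w : MonoidAlgebra R G) : Matrix (Fin n) (Fin n) R :=
  Matrix.of fun i j => w.coeff ((g i)⁻¹ * g j)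

/-- over a field `R`, a non-zero element `u` of the group ring `RG`
is a zero-divisor iff `det σ(u) = 0`, and a unit iff `det σ(u) ≠ 0`. -/
theorem stmt1 {R : Type*} [Field R] {G : Type*} [Group G] {n : ℕ}
    (g : Fin n ≃ G) (u : MonoidAlgebra R G) (hu : u ≠ 0) :
    ((∃ w : MonoidAlgebra R G, w ≠ 0 ∧ u * w = 0) ↔ (rgMatrix g u).det = 0) ∧
    (IsUnit u ↔ (rgMatrix g u).det ≠ 0) := by
  classical
  haveI : Fintype G := Fintype.ofEquiv _ g
  let b : Module.Basis (Fin n) R (MonoidAlgebra R G) :=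
    (MonoidAlgebra.basis G R).reindex g.symm
  haveI : FiniteDimensional R (MonoidAlgebra R G) :=
    Module.Finite.of_basis b
  have hb : ∀ j : Fin n, b j = MonoidAlgebra.single (g j) (1 : R) := by
    intro j
    erw [Module.Basis.reindex_apply]
    simp only [Equiv.symm_symm]
    erw [MonoidAlgebra.basis_apply]
  have hbrepr : ∀ (x : MonoidAlgebra R G) (i : Fin n), b.repr x i = x.coeff (g i) := by
    intro x i
    simp only [b, Module.Basis.repr_reindex, Finsupp.mapDomain_equiv_apply, Equiv.symm_symm,
      Equiv.symm_apply_apply]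
    rfl
  -- inversion permutation
  let π : Fin n ≃ Fin n := (g.trans (Equiv.inv G)).trans g.symm
  have hπ : ∀ i : Fin n, g (π i) = (g i)⁻¹ := by
    intro i; simp [π]
  -- matrix of left multiplication
  have hL : LinearMap.toMatrix b b (LinearMap.mulLeft R u)
      = (rgMatrix g u).submatrix π π := by
    ext i j
    rw [LinearMap.toMatrix_apply, hb j, LinearMap.mulLeft_apply, hbrepr]
    simp [rgMatrix, hπ, MonoidAlgebra.mul_single_apply]
  -- matrix of right multiplication
  have hR : LinearMap.toMatrix b b (LinearMap.mulRight R u)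
      = (rgMatrix g u).transpose := by
    ext i j
    rw [LinearMap.toMatrix_apply, hb j, LinearMap.mulRight_apply, hbrepr]
    simp [rgMatrix, MonoidAlgebra.single_mul_apply]
  have hdL : LinearMap.det (LinearMap.mulLeft R u) = (rgMatrix g u).det := by
    rw [← LinearMap.det_toMatrix b, hL, Matrix.det_submatrix_equiv_self]
  have hdR : LinearMap.det (LinearMap.mulRight R u) = (rgMatrix g u).det := by
    rw [← LinearMap.det_toMatrix b, hR, Matrix.det_transpose]
  -- if det ≠ 0 then u is a unit
  have hunit : (rgMatrix g u).det ≠ 0 → IsUnit u := by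
    intro hdet
    obtain ⟨v, hv⟩ := (LinearMap.equivOfDetNeZero (LinearMap.mulLeft R u)
      (hdL ▸ hdet)).surjective 1
    obtain ⟨w, hw⟩ := (LinearMap.equivOfDetNeZero (LinearMap.mulRight R u)
      (hdR ▸ hdet)).surjective 1
    have hv : u * v = 1 := hv
    have hw : w * u = 1 := hw
    have hwv : w = v := by
      calc w = w * (u * v) := by rw [hv, mul_one]
        _ = (w * u) * v := by rw [mul_assoc]
        _ = v := by rw [hw, one_mul]
    exact ⟨⟨u, v, hv, hwv ▸ hw⟩, rfl⟩
  have hinj : (rgMatrix g u).det ≠ 0 →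
      Function.Injective (LinearMap.mulLeft R u) := fun hdet a₁ a₂ h =>
    (LinearMap.equivOfDetNeZero (LinearMap.mulLeft R u) (hdL ▸ hdet)).injective h
  constructor
  · constructor
    · rintro ⟨w, hw0, hw⟩
      by_contra hdet
      apply hw0
      have := hinj hdet (a₁ := w) (a₂ := 0) (by simpa using hw)
      simpa using this
    · intro hdet
      have := LinearMap.bot_lt_ker_of_det_eq_zero (f := LinearMap.mulLeft R u)
        (hdL.trans hdet)
      obtain ⟨w, hwmem, hw0⟩ := SetLike.exists_of_lt this
      exact ⟨w, fun h => hw0 (by simp [h]), by simpa using hwmem⟩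
  · constructor
    · intro h
      have hU : IsUnit (LinearMap.mulLeft R u) := by
        obtain ⟨w, rfl⟩ := h
        refine ⟨⟨LinearMap.mulLeft R (w : MonoidAlgebra R G),
          LinearMap.mulLeft R ((w⁻¹ : _) : MonoidAlgebra R G), ?_, ?_⟩, rfl⟩
        · rw [Module.End.mul_eq_comp, ← LinearMap.mulLeft_mul]
          simp [LinearMap.mulLeft_one, Module.End.one_eq_id]
        · rw [Module.End.mul_eq_comp, ← LinearMap.mulLeft_mul]
          simp [LinearMap.mulLeft_one, Module.End.one_eq_id]
      have := LinearMap.isUnit_det _ hU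
      rw [hdL] at this
      exact this.ne_zero
    · exact hunit
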